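/- Let n ≥ 1 and let S be a function from ℂ to the n×n complex matrices that is analytic on a neighborhood of 0 and such that S(z) is invertible for all z with 0 < |z| < ε, for some ε > 0. Then there exist matrix-valued functions L and R, analytic on a neighborhood of 0, whose determinants det L(z) and det R(z) are constant and nonzero, such that L(z)·S(z)·R(z) is the diagonal matrix diag(s₁(z), …, s_n(z)) where each s_i is analytic near 0 and not identically zero, and the orders of vanishing at 0 satisfy ord₀ s₁ ≤ ord₀ s₂ ≤ … ≤ ord₀ s_n. -/

import Mathlib

open Filter Topology
open Matrix


noncomputable def AnalyticAt.order {f : ℂ → ℂ} {z₀ : ℂ} (_hf : AnalyticAt ℂ f z₀) : ℕ∞ :=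
  analyticOrderAt f z₀

theorem AnalyticAt.order_eq_top_iff {f : ℂ → ℂ} {z₀ : ℂ} (hf : AnalyticAt ℂ f z₀) :
    hf.order = ⊤ ↔ ∀ᶠ z in 𝓝 z₀, f z = 0 := analyticOrderAt_eq_top

theorem AnalyticAt.order_eq_nat_iff {f : ℂ → ℂ} {z₀ : ℂ} (hf : AnalyticAt ℂ f z₀) (n : ℕ) :
    hf.order = n ↔ ∃ g : ℂ → ℂ, AnalyticAt ℂ g z₀ ∧ g z₀ ≠ 0 ∧
      ∀ᶠ z in 𝓝 z₀, f z = (z - z₀) ^ n • g z := hf.analyticOrderAt_eq_natCast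

namespace SmithAux

/-- `f` is divisible by `z^m` as a germ at `0`. -/
def Zdvd (m : ℕ) (f : ℂ → ℂ) : Prop :=
  ∃ g : ℂ → ℂ, AnalyticAt ℂ g 0 ∧ ∀ᶠ z in 𝓝 (0:ℂ), f z = z ^ m * g z

lemma zpow_analytic (m : ℕ) : AnalyticAt ℂ (fun z : ℂ => z ^ m) 0 :=
  (analyticAt_id).pow m

lemma Zdvd.analyticAt {m : ℕ} {f : ℂ → ℂ} (h : Zdvd m f) : AnalyticAt ℂ f 0 := by
  obtain ⟨g, hg, he⟩ := h
  exact ((zpow_analytic m).mul hg).congr (he.mono fun z hz => hz.symm)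

lemma Zdvd.zero (m : ℕ) : Zdvd m (fun _ => (0:ℂ)) :=
  ⟨0, analyticAt_const, by simp⟩

lemma Zdvd.add {m : ℕ} {f g : ℂ → ℂ} (hf : Zdvd m f) (hg : Zdvd m g) :
    Zdvd m (fun z => f z + g z) := by
  obtain ⟨a, ha, hea⟩ := hf
  obtain ⟨b, hb, heb⟩ := hg
  exact ⟨fun z => a z + b z, ha.add hb, by
    filter_upwards [hea, heb] with z h1 h2; rw [h1, h2]; ring⟩

lemma Zdvd.mul_left {m : ℕ} {f : ℂ → ℂ} (g : ℂ → ℂ) (hg : AnalyticAt ℂ g 0)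
    (hf : Zdvd m f) : Zdvd m (fun z => g z * f z) := by
  obtain ⟨a, ha, hea⟩ := hf
  exact ⟨fun z => g z * a z, hg.mul ha, by
    filter_upwards [hea] with z h1; rw [h1]; ring⟩

lemma Zdvd.mul_right {m : ℕ} {f : ℂ → ℂ} (g : ℂ → ℂ) (hg : AnalyticAt ℂ g 0)
    (hf : Zdvd m f) : Zdvd m (fun z => f z * g z) := by
  have := hf.mul_left g hg
  simpa [mul_comm] using this

lemma Zdvd.sum {m : ℕ} {ι : Type*} (s : Finset ι) (f : ι → ℂ → ℂ)
    (h : ∀ i ∈ s, Zdvd m (f i)) : Zdvd m (fun z => ∑ i ∈ s, f i z) := by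
  classical
  induction s using Finset.induction_on with
  | empty => simpa using Zdvd.zero m
  | insert a s hni ih =>
    simp only [Finset.sum_insert hni]
    exact (h a (Finset.mem_insert_self a s)).add
      (ih fun i hi => h i (Finset.mem_insert_of_mem hi))

/-- From `Zdvd m f` we get `m ≤ order`. -/
lemma Zdvd.le_order {m : ℕ} {f : ℂ → ℂ} (h : Zdvd m f) (hf : AnalyticAt ℂ f 0) :
    (m : ℕ∞) ≤ hf.order := by
  obtain ⟨g, hg, he⟩ := h
  cases horder : hg.order with
  | top =>
    have : ∀ᶠ z in 𝓝 (0:ℂ), f z = 0 := by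
      filter_upwards [he, hg.order_eq_top_iff.mp horder] with z h1 h2
      rw [h1, h2, mul_zero]
    rw [hf.order_eq_top_iff.mpr this]; exact le_top
  | coe k =>
    obtain ⟨u, hu, hu0, heu⟩ := (hg.order_eq_nat_iff k).mp horder
    have : hf.order = ((m + k : ℕ) : ℕ∞) := by
      rw [hf.order_eq_nat_iff]
      refine ⟨u, hu, hu0, ?_⟩
      filter_upwards [he, heu] with z h1 h2
      rw [h1, h2]
      simp [pow_add, smul_eq_mul]; ring
    rw [this]
    exact_mod_cast Nat.le_add_right m k

/-- From `m ≤ order` we get `Zdvd m f`. -/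
lemma zdvd_of_le_order {m : ℕ} {f : ℂ → ℂ} (hf : AnalyticAt ℂ f 0)
    (h : (m : ℕ∞) ≤ hf.order) : Zdvd m f := by
  cases horder : hf.order with
  | top =>
    exact ⟨0, analyticAt_const, by
      filter_upwards [hf.order_eq_top_iff.mp horder] with z h1; simp [h1]⟩
  | coe k =>
    rw [horder] at h
    have hmk : m ≤ k := by exact_mod_cast h
    obtain ⟨u, hu, hu0, heu⟩ := (hf.order_eq_nat_iff k).mp horder
    refine ⟨fun z => z ^ (k - m) * u z, (zpow_analytic _).mul hu, ?_⟩
    filter_upwards [heu] with z h1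
    rw [h1]
    simp only [sub_zero, smul_eq_mul]
    rw [← mul_assoc, ← pow_add, Nat.add_sub_cancel' hmk]

end SmithAux


namespace SmithAux2

variable {n : ℕ}

/-- Block matrix `[[a, 0], [0, A]]` of size `n+1`. -/
def blockOf (a : ℂ) (A : Matrix (Fin n) (Fin n) ℂ) : Matrix (Fin (n+1)) (Fin (n+1)) ℂ :=
  Matrix.of (Fin.cons (Fin.cons a 0) (fun i => Fin.cons 0 (A i)))

@[simp] lemma blockOf_zero_zero (a : ℂ) (A : Matrix (Fin n) (Fin n) ℂ) :
    blockOf a A 0 0 = a := rfl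

@[simp] lemma blockOf_zero_succ (a : ℂ) (A : Matrix (Fin n) (Fin n) ℂ) (j : Fin n) :
    blockOf a A 0 j.succ = 0 := by simp [blockOf]

@[simp] lemma blockOf_succ_zero (a : ℂ) (A : Matrix (Fin n) (Fin n) ℂ) (i : Fin n) :
    blockOf a A i.succ 0 = 0 := by simp [blockOf]

@[simp] lemma blockOf_succ_succ (a : ℂ) (A : Matrix (Fin n) (Fin n) ℂ) (i j : Fin n) :
    blockOf a A i.succ j.succ = A i j := by simp [blockOf]

lemma blockOf_mul (a b : ℂ) (A B : Matrix (Fin n) (Fin n) ℂ) :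
    blockOf a A * blockOf b B = blockOf (a * b) (A * B) := by
  ext i j
  rw [Matrix.mul_apply, Fin.sum_univ_succ]
  induction i using Fin.cases <;> induction j using Fin.cases <;>
    simp [Matrix.mul_apply]

lemma blockOf_submatrix (a : ℂ) (A : Matrix (Fin n) (Fin n) ℂ) :
    (blockOf a A).submatrix Fin.succ Fin.succ = A := by
  ext i j; simp

lemma det_blockOf (a : ℂ) (A : Matrix (Fin n) (Fin n) ℂ) :
    (blockOf a A).det = a * A.det := by
  rw [Matrix.det_succ_column_zero, Fin.sum_univ_succ]
  simp [Fin.succAbove_zero, blockOf_submatrix]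

lemma eq_blockOf (M : Matrix (Fin (n+1)) (Fin (n+1)) ℂ)
    (h1 : ∀ i : Fin n, M i.succ 0 = 0) (h2 : ∀ j : Fin n, M 0 j.succ = 0) :
    M = blockOf (M 0 0) (M.submatrix Fin.succ Fin.succ) := by
  ext i j
  induction i using Fin.cases <;> induction j using Fin.cases <;>
    simp [h1, h2]

lemma diagonal_cons (a : ℂ) (v : Fin n → ℂ) :
    Matrix.diagonal (Fin.cons a v) = blockOf a (Matrix.diagonal v) := by
  ext i j
  induction i using Fin.cases <;> induction j using Fin.cases <;>
    simp [Matrix.diagonal_apply, Fin.succ_ne_zero, (Fin.succ_ne_zero _).symm,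
      Fin.succ_inj]

/-- Column operation matrix: identity plus entries `v i` in column 0. -/
def colOp (v : Fin n → ℂ) : Matrix (Fin (n+1)) (Fin (n+1)) ℂ :=
  Matrix.of (Fin.cons (Fin.cons 1 0)
    (fun i => Fin.cons (v i) (fun j => if i = j then 1 else 0)))

@[simp] lemma colOp_zero_zero (v : Fin n → ℂ) : colOp v 0 0 = 1 := rfl
@[simp] lemma colOp_zero_succ (v : Fin n → ℂ) (j : Fin n) : colOp v 0 j.succ = 0 := by
  simp [colOp]
@[simp] lemma colOp_succ_zero (v : Fin n → ℂ) (i : Fin n) : colOp v i.succ 0 = v i := by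
  simp [colOp]
@[simp] lemma colOp_succ_succ (v : Fin n → ℂ) (i j : Fin n) :
    colOp v i.succ j.succ = if i = j then 1 else 0 := by simp [colOp]

def rowOp (w : Fin n → ℂ) : Matrix (Fin (n+1)) (Fin (n+1)) ℂ := (colOp w)ᵀ

@[simp] lemma rowOp_zero_zero (w : Fin n → ℂ) : rowOp w 0 0 = 1 := rfl
@[simp] lemma rowOp_succ_zero (w : Fin n → ℂ) (i : Fin n) : rowOp w i.succ 0 = 0 := by
  simp [rowOp, Matrix.transpose_apply]
@[simp] lemma rowOp_zero_succ (w : Fin n → ℂ) (j : Fin n) : rowOp w 0 j.succ = w j := by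
  simp [rowOp, Matrix.transpose_apply]
@[simp] lemma rowOp_succ_succ (w : Fin n → ℂ) (i j : Fin n) :
    rowOp w i.succ j.succ = if i = j then 1 else 0 := by
  simp [rowOp, Matrix.transpose_apply, eq_comm]

lemma det_colOp (v : Fin n → ℂ) : (colOp v).det = 1 := by
  rw [Matrix.det_succ_row_zero, Fin.sum_univ_succ]
  have h1 : (colOp v).submatrix Fin.succ Fin.succ = 1 := by
    ext i j; simp [Matrix.one_apply]
  simp [Fin.succAbove_zero, h1]

lemma det_rowOp (w : Fin n → ℂ) : (rowOp w).det = 1 := by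
  rw [rowOp, Matrix.det_transpose]; exact det_colOp w

lemma colOp_mul_zero (v : Fin n → ℂ) (M : Matrix (Fin (n+1)) (Fin (n+1)) ℂ) (j : Fin (n+1)) :
    (colOp v * M) 0 j = M 0 j := by
  rw [Matrix.mul_apply, Fin.sum_univ_succ]
  simp

lemma colOp_mul_succ (v : Fin n → ℂ) (M : Matrix (Fin (n+1)) (Fin (n+1)) ℂ) (i : Fin n)
    (j : Fin (n+1)) : (colOp v * M) i.succ j = v i * M 0 j + M i.succ j := by
  rw [Matrix.mul_apply, Fin.sum_univ_succ]
  simp [Finset.sum_ite_eq, Finset.mem_univ]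

lemma mul_rowOp_zero (w : Fin n → ℂ) (M : Matrix (Fin (n+1)) (Fin (n+1)) ℂ) (i : Fin (n+1)) :
    (M * rowOp w) i 0 = M i 0 := by
  rw [Matrix.mul_apply, Fin.sum_univ_succ]
  simp

lemma mul_rowOp_succ (w : Fin n → ℂ) (M : Matrix (Fin (n+1)) (Fin (n+1)) ℂ) (i : Fin (n+1))
    (j : Fin n) : (M * rowOp w) i j.succ = M i 0 * w j + M i j.succ := by
  rw [Matrix.mul_apply, Fin.sum_univ_succ]
  simp [Finset.sum_ite_eq, Finset.mem_univ]

lemma monotone_cons (a : ℕ) (v : Fin n → ℕ) (hv : Monotone v) (ha : ∀ i, a ≤ v i) :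
    Monotone (Fin.cons a v : Fin (n+1) → ℕ) := by
  intro i j hij
  induction i using Fin.cases with
  | zero =>
    induction j using Fin.cases with
    | zero => exact le_refl _
    | succ j => simpa using ha j
  | succ i =>
    induction j using Fin.cases with
    | zero => exact absurd (le_antisymm hij (Fin.zero_le _)) (Fin.succ_ne_zero i)
    | succ j =>
      simpa using hv (by simpa [Fin.succ_le_succ_iff] using hij)

end SmithAux2

namespace SmithAux3
open SmithAux SmithAux2

lemma analytic_mul_entries {N : ℕ} (A B : ℂ → Matrix (Fin N) (Fin N) ℂ)
    (hA : ∀ i j, AnalyticAt ℂ (fun z => A z i j) 0)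
    (hB : ∀ i j, AnalyticAt ℂ (fun z => B z i j) 0) :
    ∀ i j, AnalyticAt ℂ (fun z => (A z * B z) i j) 0 := by
  intro i j
  simp only [Matrix.mul_apply]
  exact Finset.analyticAt_fun_sum _ (fun k _ => (hA i k).mul (hB k j))

lemma zdvd_mul_entries_right {N m : ℕ} (A M : ℂ → Matrix (Fin N) (Fin N) ℂ)
    (hA : ∀ i j, AnalyticAt ℂ (fun z => A z i j) 0)
    (hM : ∀ i j, Zdvd m (fun z => M z i j)) :
    ∀ i j, Zdvd m (fun z => (A z * M z) i j) := by
  intro i j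
  simp only [Matrix.mul_apply]
  exact Zdvd.sum _ _ (fun k _ => (hM k j).mul_left _ (hA i k))

lemma zdvd_mul_entries_left {N m : ℕ} (A M : ℂ → Matrix (Fin N) (Fin N) ℂ)
    (hA : ∀ i j, AnalyticAt ℂ (fun z => A z i j) 0)
    (hM : ∀ i j, Zdvd m (fun z => M z i j)) :
    ∀ i j, Zdvd m (fun z => (M z * A z) i j) := by
  intro i j
  simp only [Matrix.mul_apply]
  exact Zdvd.sum _ _ (fun k _ => (hM i k).mul_right _ (hA k j))

theorem key : ∀ (n : ℕ) (S : ℂ → Matrix (Fin n) (Fin n) ℂ),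
    (∀ i j, AnalyticAt ℂ (fun z => S z i j) 0) →
    (¬ ∀ᶠ z in 𝓝 (0:ℂ), (S z).det = 0) →
    ∃ (L R : ℂ → Matrix (Fin n) (Fin n) ℂ) (s : Fin n → ℂ → ℂ) (cL cR : ℂ) (d : Fin n → ℕ),
      (∀ i j, AnalyticAt ℂ (fun z => L z i j) 0) ∧
      (∀ i j, AnalyticAt ℂ (fun z => R z i j) 0) ∧
      cL ≠ 0 ∧ cR ≠ 0 ∧
      (∀ z, (L z).det = cL) ∧
      (∀ z, (R z).det = cR) ∧
      (∀ i, AnalyticAt ℂ (s i) 0) ∧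
      (∀ i, ∃ u : ℂ → ℂ, AnalyticAt ℂ u 0 ∧ u 0 ≠ 0 ∧
        ∀ᶠ z in 𝓝 (0:ℂ), s i z = z ^ d i * u z) ∧
      Monotone d ∧
      (∀ m, (∀ i j, Zdvd m (fun z => S z i j)) → ∀ i, m ≤ d i) ∧
      (∀ᶠ z in 𝓝 (0:ℂ), L z * S z * R z = Matrix.diagonal (fun i => s i z)) := by
  intro n
  induction n with
  | zero =>
    intro S _ _
    refine ⟨fun _ => 1, fun _ => 1, fun i => i.elim0, 1, 1, fun i => i.elim0,
      fun i _ => i.elim0, fun i _ => i.elim0, one_ne_zero, one_ne_zero,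
      fun _ => Matrix.det_one, fun _ => Matrix.det_one,
      fun i => i.elim0, fun i => i.elim0, by intro i; exact i.elim0,
      fun m _ i => i.elim0,
      Filter.Eventually.of_forall fun z => by ext i j; exact i.elim0⟩
  | succ n IH =>
    intro S hS hdet
    classical
    obtain ⟨p₀, -, hmin⟩ := Finset.exists_min_image (Finset.univ : Finset (Fin (n+1) × Fin (n+1)))
      (fun p => (hS p.1 p.2).order) ⟨⟨0, 0⟩, Finset.mem_univ _⟩
    set i₀ := p₀.1 with hi₀
    set j₀ := p₀.2 with hj₀
    have hne : (hS i₀ j₀).order ≠ ⊤ := by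
      intro htop
      apply hdet
      have hall : ∀ᶠ z in 𝓝 (0:ℂ), ∀ p : Fin (n+1) × Fin (n+1), S z p.1 p.2 = 0 := by
        rw [eventually_all]
        intro p
        have h1 : (hS p.1 p.2).order = ⊤ :=
          top_le_iff.mp (htop ▸ hmin p (Finset.mem_univ p))
        exact (hS p.1 p.2).order_eq_top_iff.mp h1
      filter_upwards [hall] with z hz
      have hz0 : S z = 0 := by ext i j; exact hz (i, j)
      rw [hz0, Matrix.det_zero]
    set d₁ : ℕ := (hS i₀ j₀).order.toNat with hd₁def
    have hord₁ : (hS i₀ j₀).order = (d₁ : ℕ∞) := (ENat.coe_toNat hne).symm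
    obtain ⟨u, hu, hu0, hequ0⟩ := ((hS i₀ j₀).order_eq_nat_iff d₁).mp hord₁
    have hequ : ∀ᶠ z in 𝓝 (0:ℂ), S z i₀ j₀ = z ^ d₁ * u z := by
      filter_upwards [hequ0] with z h1
      simpa [smul_eq_mul] using h1
    set σ : Equiv.Perm (Fin (n+1)) := Equiv.swap 0 i₀ with hσdef
    set τ : Equiv.Perm (Fin (n+1)) := Equiv.swap 0 j₀ with hτdef
    have hσ0 : σ 0 = i₀ := Equiv.swap_apply_left 0 i₀
    have hτ0 : τ 0 = j₀ := Equiv.swap_apply_left 0 j₀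
    set Pσ : Matrix (Fin (n+1)) (Fin (n+1)) ℂ := (1 : Matrix _ _ ℂ).submatrix σ id with hPσ
    set Pτ : Matrix (Fin (n+1)) (Fin (n+1)) ℂ := (1 : Matrix _ _ ℂ).submatrix id τ with hPτ
    set S₁ : ℂ → Matrix (Fin (n+1)) (Fin (n+1)) ℂ := fun z => Pσ * S z * Pτ with hS₁def
    have hS₁e : ∀ z i j, S₁ z i j = S z (σ i) (τ j) := by
      intro z i j
      have h1 : Pσ * S z = (S z).submatrix σ id := by
        ext a b
        simp [Matrix.mul_apply, Matrix.one_apply, hPσ]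
      have h2 : (S z).submatrix σ id * Pτ = (S z).submatrix σ τ := by
        ext a b
        simp [Matrix.mul_apply, Matrix.one_apply, hPτ]
      rw [hS₁def]
      simp only []
      rw [h1, h2]
      rfl
    have hS₁mat : ∀ z, S₁ z = (S z).submatrix σ τ := by
      intro z; ext i j; rw [hS₁e]; rfl
    have hS₁a : ∀ i j, AnalyticAt ℂ (fun z => S₁ z i j) 0 := by
      intro i j
      have h1 : (fun z => S₁ z i j) = fun z => S z (σ i) (τ j) :=
        funext fun z => hS₁e z i j
      rw [h1]; exact hS (σ i) (τ j)
    have horder : ∀ i j, (d₁ : ℕ∞) ≤ (hS (σ i) (τ j)).order := by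
      intro i j
      rw [← hord₁]
      exact hmin (σ i, τ j) (Finset.mem_univ _)
    -- division helper
    have hdiv : ∀ f : ℂ → ℂ, Zdvd d₁ f →
        ∃ qf : ℂ → ℂ, AnalyticAt ℂ qf 0 ∧
          ∀ᶠ z in 𝓝 (0:ℂ), f z = qf z * (z ^ d₁ * u z) := by
      rintro f ⟨g, hg, heg⟩
      refine ⟨fun z => g z / u z, hg.div hu hu0, ?_⟩
      have hune : ∀ᶠ z in 𝓝 (0:ℂ), u z ≠ 0 := hu.continuousAt.eventually_ne hu0
      filter_upwards [heg, hune] with z h1 h2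
      rw [h1]; field_simp
    choose q hq hqe using fun i : Fin n =>
      hdiv _ (zdvd_of_le_order (hS (σ i.succ) (τ 0)) (horder i.succ 0))
    choose q' hq' hqe' using fun j : Fin n =>
      hdiv _ (zdvd_of_le_order (hS (σ 0) (τ j.succ)) (horder 0 j.succ))
    set E : ℂ → Matrix (Fin (n+1)) (Fin (n+1)) ℂ := fun z => colOp (fun i => -(q i z)) with hEdef
    set F : ℂ → Matrix (Fin (n+1)) (Fin (n+1)) ℂ := fun z => rowOp (fun j => -(q' j z)) with hFdef
    have hEa : ∀ i j, AnalyticAt ℂ (fun z => E z i j) 0 := by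
      intro i j
      induction i using Fin.cases <;> induction j using Fin.cases <;>
        simp only [hEdef, colOp_zero_zero, colOp_zero_succ, colOp_succ_zero, colOp_succ_succ]
      · exact analyticAt_const
      · exact analyticAt_const
      · exact (hq _).neg
      · exact analyticAt_const
    have hFa : ∀ i j, AnalyticAt ℂ (fun z => F z i j) 0 := by
      intro i j
      induction i using Fin.cases <;> induction j using Fin.cases <;>
        simp only [hFdef, rowOp_zero_zero, rowOp_zero_succ, rowOp_succ_zero, rowOp_succ_succ]
      · exact analyticAt_const
      · exact (hq' _).neg
      · exact analyticAt_const
      · exact analyticAt_const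
    set T : ℂ → Matrix (Fin (n+1)) (Fin (n+1)) ℂ := fun z => E z * S₁ z * F z with hTdef
    have hTa : ∀ i j, AnalyticAt ℂ (fun z => T z i j) 0 :=
      analytic_mul_entries _ _ (analytic_mul_entries _ _ hEa hS₁a) hFa
    have hT00 : ∀ z, T z 0 0 = S z i₀ j₀ := by
      intro z
      rw [hTdef]
      simp only []
      rw [mul_rowOp_zero, colOp_mul_zero, hS₁e, hσ0, hτ0]
    have hcol : ∀ᶠ z in 𝓝 (0:ℂ), ∀ i : Fin n, T z i.succ 0 = 0 := by
      rw [eventually_all]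
      intro i
      filter_upwards [hqe i, hequ] with z h1 h2
      rw [hTdef]
      simp only []
      rw [mul_rowOp_zero, colOp_mul_succ, hS₁e, hS₁e, hσ0, hτ0]
      rw [h2, ← hτ0, h1]
      ring
    have hrow : ∀ᶠ z in 𝓝 (0:ℂ), ∀ j : Fin n, T z 0 j.succ = 0 := by
      rw [eventually_all]
      intro j
      filter_upwards [hqe' j, hequ] with z h1 h2
      rw [hTdef]
      simp only []
      rw [mul_rowOp_succ, colOp_mul_zero, colOp_mul_zero, hS₁e, hS₁e, hσ0, hτ0]
      rw [h2, ← hσ0, h1]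
      ring
    set B : ℂ → Matrix (Fin n) (Fin n) ℂ := fun z => (T z).submatrix Fin.succ Fin.succ
      with hBdef
    have hBa : ∀ i j, AnalyticAt ℂ (fun z => B z i j) 0 := fun i j => hTa i.succ j.succ
    have hTb : ∀ᶠ z in 𝓝 (0:ℂ), T z = blockOf (S z i₀ j₀) (B z) := by
      filter_upwards [hcol, hrow] with z h1 h2
      have h3 := eq_blockOf (T z) h1 h2
      rw [h3, hT00]
    -- divisibility of entries
    have hS₁dvd : ∀ i j, Zdvd d₁ (fun z => S₁ z i j) := by
      intro i j
      have h1 : (fun z => S₁ z i j) = fun z => S z (σ i) (τ j) :=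
        funext fun z => hS₁e z i j
      rw [h1]
      exact zdvd_of_le_order _ (horder i j)
    have hTdvd : ∀ i j, Zdvd d₁ (fun z => T z i j) :=
      zdvd_mul_entries_left _ _ hFa (zdvd_mul_entries_right _ _ hEa hS₁dvd)
    have hBdvd : ∀ i j, Zdvd d₁ (fun z => B z i j) := fun i j => hTdvd i.succ j.succ
    -- determinant bookkeeping
    set cσ : ℂ := ((Equiv.Perm.sign σ : ℤ) : ℂ) with hcσ
    set cτ : ℂ := ((Equiv.Perm.sign τ : ℤ) : ℂ) with hcτ
    have hcσ0 : cσ ≠ 0 := by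
      rw [hcσ]; exact_mod_cast Int.cast_ne_zero.mpr (Units.ne_zero _)
    have hcτ0 : cτ ≠ 0 := by
      rw [hcτ]; exact_mod_cast Int.cast_ne_zero.mpr (Units.ne_zero _)
    have hdetS₁ : ∀ z, (S₁ z).det = cσ * (cτ * (S z).det) := by
      intro z
      rw [hS₁mat]
      have h1 : (S z).submatrix σ τ = ((S z).submatrix id τ).submatrix σ id := by
        rw [Matrix.submatrix_submatrix]
        rfl
      rw [h1, Matrix.det_permute, Matrix.det_permute', hcσ, hcτ]
    have hdetT : ∀ z, (T z).det = cσ * (cτ * (S z).det) := by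
      intro z
      rw [hTdef]
      simp only []
      rw [Matrix.det_mul, Matrix.det_mul, hEdef, hFdef]
      simp only []
      rw [det_colOp, det_rowOp, hdetS₁]
      ring
    have hdetB : ¬ ∀ᶠ z in 𝓝 (0:ℂ), (B z).det = 0 := by
      intro hB0
      apply hdet
      filter_upwards [hB0, hTb] with z h1 h2
      have h3 : (T z).det = S z i₀ j₀ * (B z).det := by rw [h2, det_blockOf]
      rw [hdetT, h1, mul_zero] at h3
      rcases mul_eq_zero.mp h3 with h4 | h4
      · exact absurd h4 hcσ0
      rcases mul_eq_zero.mp h4 with h5 | h5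
      · exact absurd h5 hcτ0
      exact h5
    -- apply induction hypothesis
    obtain ⟨L', R', s', cL', cR', d', hL'a, hR'a, hcL', hcR', hdL', hdR', hs'a, hs'u,
      hmono', hdvdcl', hev'⟩ := IH B hBa hdetB
    have hd₁le : ∀ i, d₁ ≤ d' i := hdvdcl' d₁ hBdvd
    -- assemble
    set L : ℂ → Matrix (Fin (n+1)) (Fin (n+1)) ℂ :=
      fun z => blockOf 1 (L' z) * E z * Pσ with hLdef
    set R : ℂ → Matrix (Fin (n+1)) (Fin (n+1)) ℂ :=
      fun z => Pτ * (F z * blockOf 1 (R' z)) with hRdef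
    set s₁ : ℂ → ℂ := fun z => S z i₀ j₀ with hs₁def
    have hlift : ∀ (A : ℂ → Matrix (Fin n) (Fin n) ℂ),
        (∀ i j, AnalyticAt ℂ (fun z => A z i j) 0) →
        ∀ i j, AnalyticAt ℂ (fun z => blockOf 1 (A z) i j) 0 := by
      intro A hA i j
      induction i using Fin.cases <;> induction j using Fin.cases <;>
        simp only [blockOf_zero_zero, blockOf_zero_succ, blockOf_succ_zero, blockOf_succ_succ]
      · exact analyticAt_const
      · exact analyticAt_const
      · exact analyticAt_const
      · exact hA _ _
    have hPσa : ∀ i j, AnalyticAt ℂ (fun _ : ℂ => Pσ i j) 0 := fun i j => analyticAt_const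
    have hPτa : ∀ i j, AnalyticAt ℂ (fun _ : ℂ => Pτ i j) 0 := fun i j => analyticAt_const
    have hLa : ∀ i j, AnalyticAt ℂ (fun z => L z i j) 0 :=
      analytic_mul_entries _ _ (analytic_mul_entries _ _ (hlift L' hL'a) hEa) hPσa
    have hRa : ∀ i j, AnalyticAt ℂ (fun z => R z i j) 0 :=
      analytic_mul_entries _ _ hPτa (analytic_mul_entries _ _ hFa (hlift R' hR'a))
    have hdetPσ : Pσ.det = cσ := by
      rw [hPσ, Matrix.det_permute, Matrix.det_one, mul_one, hcσ]
    have hdetPτ : Pτ.det = cτ := by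
      rw [hPτ, Matrix.det_permute', Matrix.det_one, mul_one, hcτ]
    have hdetL : ∀ z, (L z).det = cL' * cσ := by
      intro z
      rw [hLdef]
      simp only []
      rw [Matrix.det_mul, Matrix.det_mul, det_blockOf, hdL' z, hEdef]
      simp only []
      rw [det_colOp, hdetPσ]
      ring
    have hdetR : ∀ z, (R z).det = cR' * cτ := by
      intro z
      rw [hRdef]
      simp only []
      rw [Matrix.det_mul, Matrix.det_mul, det_blockOf, hdR' z, hFdef]
      simp only []
      rw [det_rowOp, hdetPτ]
      ring
    refine ⟨L, R, (Fin.cons s₁ s' : Fin (n+1) → ℂ → ℂ), cL' * cσ, cR' * cτ,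
      (Fin.cons d₁ d' : Fin (n+1) → ℕ), hLa, hRa,
      mul_ne_zero hcL' hcσ0, mul_ne_zero hcR' hcτ0, hdetL, hdetR, ?_, ?_, ?_, ?_, ?_⟩
    · intro i
      induction i using Fin.cases with
      | zero => simpa using hS i₀ j₀
      | succ i => simpa using hs'a i
    · intro i
      induction i using Fin.cases with
      | zero => exact ⟨u, hu, hu0, by simpa using hequ⟩
      | succ i => simpa using hs'u i
    · exact monotone_cons d₁ d' hmono' hd₁le
    · intro m hm i
      have hS₁m : ∀ i j, Zdvd m (fun z => S₁ z i j) := by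
        intro i j
        have h1 : (fun z => S₁ z i j) = fun z => S z (σ i) (τ j) :=
          funext fun z => hS₁e z i j
        rw [h1]; exact hm _ _
      have hTm : ∀ i j, Zdvd m (fun z => T z i j) :=
        zdvd_mul_entries_left _ _ hFa (zdvd_mul_entries_right _ _ hEa hS₁m)
      have hBm : ∀ i j, Zdvd m (fun z => B z i j) := fun i j => hTm i.succ j.succ
      induction i using Fin.cases with
      | zero =>
        have h1 : (m : ℕ∞) ≤ (hS i₀ j₀).order := (hm i₀ j₀).le_order (hS i₀ j₀)
        rw [hord₁] at h1
        simpa using Nat.cast_le.mp h1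
      | succ i => simpa using hdvdcl' m hBm i
    · filter_upwards [hTb, hev'] with z h1 h2
      have e1 : L z * S z * R z = blockOf 1 (L' z) * T z * blockOf 1 (R' z) := by
        rw [hLdef, hRdef, hTdef, hS₁def]
        simp only [Matrix.mul_assoc]
      rw [e1, h1, blockOf_mul, blockOf_mul, h2]
      have e2 : (fun i => (Fin.cons s₁ s' : Fin (n+1) → ℂ → ℂ) i z) =
          (Fin.cons (S z i₀ j₀) (fun i => s' i z) : Fin (n+1) → ℂ) := by
        funext i
        induction i using Fin.cases <;> simp [hs₁def]
      rw [e2, diagonal_cons]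
      norm_num

end SmithAux3

/-- Smith-type normal form for an analytic matrix-valued function: if `S : ℂ → Mₙ(ℂ)` is
analytic near `0` and `S z` is invertible for `0 < |z| < ε`, then there are analytic
matrix functions `L, R` near `0` with constant nonzero determinants such that
`L z * S z * R z = diag(s₁ z, …, s_n z)` near `0`, where each `s_i` is analytic near `0`,
not identically zero (indeed `s_i z = z^{d_i}·u_i z` with `u_i` analytic, `u_i 0 ≠ 0`),
and the vanishing orders `d_1 ≤ d_2 ≤ … ≤ d_n` are increasing. -/
theorem stmt8 (n : ℕ) (hn : 1 ≤ n) (S : ℂ → Matrix (Fin n) (Fin n) ℂ)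
    (hS : ∀ i j, AnalyticAt ℂ (fun z => S z i j) 0)
    (hinv : ∃ ε > (0 : ℝ), ∀ z : ℂ, z ≠ 0 → ‖z‖ < ε → IsUnit (S z)) :
    ∃ (L R : ℂ → Matrix (Fin n) (Fin n) ℂ) (s : Fin n → ℂ → ℂ)
      (cL cR : ℂ) (d : Fin n → ℕ),
      (∀ i j, AnalyticAt ℂ (fun z => L z i j) 0) ∧
      (∀ i j, AnalyticAt ℂ (fun z => R z i j) 0) ∧
      cL ≠ 0 ∧ cR ≠ 0 ∧
      (∀ᶠ z in 𝓝 (0 : ℂ), (L z).det = cL) ∧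
      (∀ᶠ z in 𝓝 (0 : ℂ), (R z).det = cR) ∧
      (∀ i, AnalyticAt ℂ (s i) 0) ∧
      (∀ i, ∃ u : ℂ → ℂ, AnalyticAt ℂ u 0 ∧ u 0 ≠ 0 ∧
        ∀ᶠ z in 𝓝 (0 : ℂ), s i z = z ^ d i * u z) ∧
      Monotone d ∧
      (∀ᶠ z in 𝓝 (0 : ℂ), L z * S z * R z = Matrix.diagonal (fun i => s i z)) := by
  obtain ⟨ε, hε, hinv'⟩ := hinv
  have hdet : ¬ ∀ᶠ z in 𝓝 (0:ℂ), (S z).det = 0 := by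
    intro H
    rw [Metric.eventually_nhds_iff] at H
    obtain ⟨δ, hδ, hH⟩ := H
    set r : ℝ := min ε δ / 2 with hr'
    have hr : 0 < r := by positivity
    set z : ℂ := (r : ℂ) with hz'
    have hz0 : z ≠ 0 := by
      simp only [hz', ne_eq, Complex.ofReal_eq_zero]
      exact hr.ne'
    have hzn : ‖z‖ = r := by
      rw [hz', Complex.norm_real]; exact abs_of_pos hr
    have h1 : ‖z‖ < ε := by
      rw [hzn, hr']
      calc min ε δ / 2 ≤ ε / 2 := by gcongr; exact min_le_left _ _
        _ < ε := half_lt_self hε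
    have h2 : dist z 0 < δ := by
      rw [dist_zero_right, hzn, hr']
      calc min ε δ / 2 ≤ δ / 2 := by gcongr; exact min_le_right _ _
        _ < δ := half_lt_self hδ
    have h3 := hH h2
    exact ((Matrix.isUnit_iff_isUnit_det _).mp (hinv' z hz0 h1)).ne_zero h3
  obtain ⟨L, R, s, cL, cR, d, hLa, hRa, hcL, hcR, hdL, hdR, hsa, hsu, hmono, -, hev⟩ :=
    SmithAux3.key n S hS hdet
  exact ⟨L, R, s, cL, cR, d, hLa, hRa, hcL, hcR, Filter.Eventually.of_forall hdL,
    Filter.Eventually.of_forall hdR, hsa, hsu, hmono, hev⟩
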